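/- arXiv:1102.0969 — 4 statements merged into one kernel-verified Lean document; each statement's English description precedes it below -/
import Mathlib

section
/- For any partition S of the vertex set of a finite graph G into k parts, the modularity M(S) = Σ_i (m_i/m − (D_i/(2m))²) is at most 1 − 1/k, where m is the number of edges, m_i the number of edges inside part i, and D_i the sum of degrees of vertices in part i. -/
open Finset

/-- For any partition `P` of the vertex set of a finite graph `G` into `k` parts,
the modularity `∑_i (m_i/m − (D_i/(2m))²)` is at most `1 − 1/k`, where `m` is the
number of edges, `m_i` the number of edges inside part `i` (counted via ordered
pairs, divided by 2) and `D_i` the sum of degrees of vertices in part `i`. -/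
theorem modularity_le_one_sub_inv_card
    {V : Type*} [Fintype V] [DecidableEq V] (G : SimpleGraph V) [DecidableRel G.Adj]
    (m : ℝ) (hm : m = (G.edgeFinset.card : ℝ)) (hm0 : 0 < m)
    (P : Finpartition (Finset.univ : Finset V))
    (k : ℕ) (hk : k = P.parts.card) (hk0 : 0 < k) :
    ∑ C ∈ P.parts,
        ((∑ u ∈ C, ∑ v ∈ C, (if G.Adj u v then (1 : ℝ) else 0)) / 2 / m
          - ((∑ v ∈ C, (G.degree v : ℝ)) / (2 * m)) ^ 2)
      ≤ 1 - 1 / (k : ℝ) := by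
  have hparts : ∀ g : V → ℝ, ∑ C ∈ P.parts, ∑ v ∈ C, g v = ∑ v, g v := by
    intro g
    have h := Finset.sum_biUnion (s := P.parts) (t := id) (f := g)
      P.supIndep.pairwiseDisjoint
    rw [P.biUnion_parts] at h
    exact h.symm
  have hdegsum : ∑ v, (G.degree v : ℝ) = 2 * m := by
    rw [hm]
    exact_mod_cast G.sum_degrees_eq_twice_card_edges
  have hdeg : ∀ u, ∑ v, (if G.Adj u v then (1 : ℝ) else 0) = (G.degree u : ℝ) := by
    intro u
    rw [Finset.sum_boole, SimpleGraph.degree]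
    congr 1
    simp [SimpleGraph.neighborFinset_eq_filter]
  rw [Finset.sum_sub_distrib]
  have h1 : ∑ C ∈ P.parts, (∑ u ∈ C, ∑ v ∈ C, (if G.Adj u v then (1 : ℝ) else 0)) / 2 / m
      ≤ 1 := by
    have hle : ∑ C ∈ P.parts, ∑ u ∈ C, ∑ v ∈ C, (if G.Adj u v then (1 : ℝ) else 0)
        ≤ 2 * m := by
      calc ∑ C ∈ P.parts, ∑ u ∈ C, ∑ v ∈ C, (if G.Adj u v then (1 : ℝ) else 0)
          ≤ ∑ C ∈ P.parts, ∑ u ∈ C, (G.degree u : ℝ) := by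
            refine Finset.sum_le_sum fun C _ => Finset.sum_le_sum fun u _ => ?_
            rw [← hdeg u]
            refine Finset.sum_le_sum_of_subset_of_nonneg (Finset.subset_univ C) ?_
            intro i _ _; positivity
        _ = ∑ v, (G.degree v : ℝ) := hparts _
        _ = 2 * m := hdegsum
    have : ∑ C ∈ P.parts, (∑ u ∈ C, ∑ v ∈ C, (if G.Adj u v then (1 : ℝ) else 0)) / 2 / m
        = (∑ C ∈ P.parts, ∑ u ∈ C, ∑ v ∈ C, (if G.Adj u v then (1 : ℝ) else 0)) / (2 * m) := by
      simp only [div_div]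
      rw [← Finset.sum_div]
    rw [this, div_le_one (by positivity)]
    exact hle
  have h2 : 1 / (k : ℝ) ≤ ∑ C ∈ P.parts, ((∑ v ∈ C, (G.degree v : ℝ)) / (2 * m)) ^ 2 := by
    have hxsum : ∑ C ∈ P.parts, (∑ v ∈ C, (G.degree v : ℝ)) / (2 * m) = 1 := by
      rw [← Finset.sum_div, hparts, hdegsum, div_self (by positivity)]
    have hcs := sq_sum_le_card_mul_sum_sq (s := P.parts)
      (f := fun C => (∑ v ∈ C, (G.degree v : ℝ)) / (2 * m))
    rw [hxsum, one_pow, ← hk] at hcs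
    rw [div_le_iff₀ (by exact_mod_cast hk0)]
    linarith [hcs]
  linarith
end

section
/- For any partition S of the vertices of a graph and any k ≥ 1, there exists a partition S' into at most k parts (obtained by merging parts of S) with modularity M(S') ≥ (1 − 1/k)·M(S). Consequently OPT_k ≥ (1 − 1/k)·OPT, where OPT_k is the maximum modularity over partitions into at most k parts. -/
open Finset

/-- Modularity of the partition of `V` given by the fibers of the coloring `c`:
`M(c) = (1/(2m)) ∑_{u,v : c u = c v} (a_{u,v} − d_u d_v/(2m))`. -/
noncomputable def colMod {V : Type*} [Fintype V] [DecidableEq V]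
    (G : SimpleGraph V) [DecidableRel G.Adj]
    {I : Type*} [DecidableEq I] (c : V → I) : ℝ :=
  (1 / (2 * (G.edgeFinset.card : ℝ))) *
    ∑ u, ∑ v,
      if c u = c v then
        ((if G.Adj u v then (1 : ℝ) else 0)
          - (G.degree u : ℝ) * (G.degree v : ℝ) / (2 * (G.edgeFinset.card : ℝ)))
      else 0

lemma key_sum {I : Type*} [Fintype I] [DecidableEq I] {k : ℕ} (hk : 1 ≤ k)
    (i j : I) (hij : i ≠ j) (w : ℝ) :
    ∑ g : I → Fin k, (if g i = g j then w else 0)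
      = (Fintype.card (I → Fin k) : ℝ) / k * w := by
  have hk0 : (k : ℝ) ≠ 0 := by positivity
  have hcard : Fintype.card (I → Fin k)
      = k * Fintype.card ({ x // x ≠ j } → Fin k) := by
    rw [Fintype.card_congr (Equiv.funSplitAt j (Fin k)), Fintype.card_prod, Fintype.card_fin]
  rw [← Equiv.sum_comp (Equiv.funSplitAt j (Fin k)).symm
      (fun g : I → Fin k => if g i = g j then w else 0), Fintype.sum_prod_type,
      Finset.sum_comm]
  have step : ∀ h : { x // x ≠ j } → Fin k,
      (∑ a : Fin k, if (Equiv.funSplitAt j (Fin k)).symm (a, h) i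
          = (Equiv.funSplitAt j (Fin k)).symm (a, h) j then w else 0) = w := by
    intro h
    have e : ∀ a : Fin k,
        (if (Equiv.funSplitAt j (Fin k)).symm (a, h) i
          = (Equiv.funSplitAt j (Fin k)).symm (a, h) j then w else 0)
        = if h ⟨i, hij⟩ = a then w else 0 := by
      intro a
      simp [Equiv.funSplitAt_symm_apply, hij]
    rw [Finset.sum_congr rfl fun a _ => e a, Finset.sum_ite_eq]
    simp
  rw [Finset.sum_congr rfl fun h _ => step h, Finset.sum_const, Finset.card_univ,
    nsmul_eq_mul, hcard]
  push_cast
  field_simp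

/-- For any partition `S` of the vertices of a graph (given as the fibers of a
coloring `c : V → I`) and any `k ≥ 1`, there exists a partition into at most `k`
parts, obtained by merging parts of `S` (i.e. given by `g ∘ c` for some
`g : I → Fin k`), whose modularity is at least `(1 − 1/k)` times that of `S`.
Consequently `OPT_k ≥ (1 − 1/k)·OPT`. -/
theorem merge_into_k_clusters
    {V : Type*} [Fintype V] [DecidableEq V] (G : SimpleGraph V) [DecidableRel G.Adj]
    (hm0 : 0 < G.edgeFinset.card)
    {I : Type*} [Fintype I] [DecidableEq I] (c : V → I)
    (k : ℕ) (hk : 1 ≤ k) :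
    ∃ g : I → Fin k, (1 - 1 / (k : ℝ)) * colMod G c ≤ colMod G (g ∘ c) := by
  set m : ℝ := (G.edgeFinset.card : ℝ) with hm
  have hM : (0:ℝ) < m := by rw [hm]; exact_mod_cast hm0
  have hM0 : m ≠ 0 := ne_of_gt hM
  have hk0 : (k : ℝ) ≠ 0 := by positivity
  set N : ℝ := (Fintype.card (I → Fin k) : ℝ) with hN
  set w : V → V → ℝ := fun u v =>
    (if G.Adj u v then (1:ℝ) else 0) - (G.degree u : ℝ) * (G.degree v : ℝ) / (2*m) with hw
  have hdeg : ∑ u, (G.degree u : ℝ) = 2 * m := by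
    rw [hm, ← Nat.cast_sum, SimpleGraph.sum_degrees_eq_twice_card_edges]
    push_cast; ring
  have hA : ∀ u : V, ∑ v, (if G.Adj u v then (1:ℝ) else 0) = (G.degree u : ℝ) := by
    intro u
    rw [Finset.sum_boole]
    congr 1
    rw [SimpleGraph.degree, SimpleGraph.neighborFinset_eq_filter]
  have htot : ∑ u, ∑ v, w u v = 0 := by
    have expand : ∀ u v : V, w u v
        = (if G.Adj u v then (1:ℝ) else 0) - (G.degree u : ℝ) * (G.degree v : ℝ) / (2*m) :=
      fun u v => rfl
    simp only [expand, Finset.sum_sub_distrib, hA, hdeg]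
    have h2 : ∑ u : V, ∑ v : V, (G.degree u : ℝ) * (G.degree v : ℝ) / (2*m) = 2*m := by
      simp only [← Finset.sum_div, ← Finset.mul_sum, hdeg]
      rw [← Finset.sum_mul, hdeg]
      field_simp
    rw [h2, sub_self]
  have hfix : ∑ u, ∑ v, (if c u = c v then w u v else 0) = 2 * m * colMod G c := by
    have : colMod G c = 1/(2*m) * ∑ u, ∑ v, (if c u = c v then w u v else 0) := rfl
    rw [this]; field_simp
  have hcomp : ∀ g : I → Fin k, colMod G (g ∘ c)
      = 1/(2*m) * ∑ u, ∑ v, (if g (c u) = g (c v) then w u v else 0) := fun g => rfl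
  have h1 : ∀ u v : V, (∑ g : I → Fin k, if g (c u) = g (c v) then w u v else 0)
      = N / k * w u v + (N - N/k) * (if c u = c v then w u v else 0) := by
    intro u v
    by_cases h : c u = c v
    · rw [if_pos h]
      have e : ∀ g : I → Fin k, (if g (c u) = g (c v) then w u v else 0) = w u v := by
        intro g; rw [if_pos (by rw [h])]
      rw [Finset.sum_congr rfl fun g _ => e g, Finset.sum_const, Finset.card_univ,
        nsmul_eq_mul, ← hN]
      ring
    · rw [key_sum hk _ _ h, if_neg h, mul_zero, add_zero, hN]
  have havg : ∑ g : I → Fin k, colMod G (g ∘ c) = N * ((1 - 1/(k:ℝ)) * colMod G c) := by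
    have step1 : ∑ g : I → Fin k, colMod G (g ∘ c)
        = 1/(2*m) * ∑ g : I → Fin k, ∑ u, ∑ v,
            (if g (c u) = g (c v) then w u v else 0) := by
      rw [Finset.mul_sum]
      exact Finset.sum_congr rfl fun g _ => hcomp g
    have step2 : (∑ g : I → Fin k, ∑ u, ∑ v, (if g (c u) = g (c v) then w u v else 0))
        = ∑ u, ∑ v, ∑ g : I → Fin k, (if g (c u) = g (c v) then w u v else 0) := by
      rw [Finset.sum_comm]
      exact Finset.sum_congr rfl fun u _ => Finset.sum_comm
    have step3 : (∑ u, ∑ v, ∑ g : I → Fin k, (if g (c u) = g (c v) then w u v else 0))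
        = N/k * (∑ u, ∑ v, w u v)
          + (N - N/k) * ∑ u, ∑ v, (if c u = c v then w u v else 0) := by
      simp only [h1, Finset.sum_add_distrib, ← Finset.mul_sum]
    rw [step1, step2, step3, htot, hfix]
    field_simp
    ring
  haveI : Nonempty (Fin k) := ⟨⟨0, by omega⟩⟩
  have hne : (Finset.univ : Finset (I → Fin k)).Nonempty := Finset.univ_nonempty
  obtain ⟨g, -, hg⟩ := Finset.exists_le_of_sum_le hne (le_of_eq (by
    rw [Finset.sum_const, Finset.card_univ, nsmul_eq_mul, ← hN, havg]) :
    ∑ _g : I → Fin k, (1 - 1/(k:ℝ)) * colMod G c ≤ ∑ g : I → Fin k, colMod G (g ∘ c))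
  exact ⟨g, hg⟩
end

section
/- Let G be an (n−4)-regular graph on n vertices, V' ⊆ V with |V'| = tn, and suppose the largest clique in the induced subgraph G[V'] has αn vertices. Then M(V') ≤ (4t² + 2α − 3t)/(n−4). -/
open Finset

set_option maxHeartbeats 1000000 in
/-- Let `G` be an `(n−4)`-regular graph on `n` vertices, `V' ⊆ V` with `|V'| = t·n`,
and suppose the largest clique in the induced subgraph `G[V']` has `α·n` vertices.
Then `M(V') = m_{V'}/m − (D_{V'}/(2m))² ≤ (4t² + 2α − 3t)/(n−4)`, where `m_{V'}` is
the number of edges inside `V'` and `D_{V'}` the sum of degrees of vertices of `V'`. -/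
theorem clique_bound_on_setMod
    {V : Type*} [Fintype V] [DecidableEq V] (G : SimpleGraph V) [DecidableRel G.Adj]
    (n : ℕ) (hn : Fintype.card V = n) (hn4 : 4 < n)
    (hreg : G.IsRegularOfDegree (n - 4))
    (t α : ℝ)
    (V' : Finset V) (hcard : (V'.card : ℝ) = t * n)
    (S : Finset V) (hS : S ⊆ V') (hSclique : G.IsClique (S : Set V))
    (hScard : (S.card : ℝ) = α * n)
    (hSmax : ∀ T ⊆ V', G.IsClique (T : Set V) → T.card ≤ S.card) :
    (∑ u ∈ V', ∑ v ∈ V', (if G.Adj u v then (1 : ℝ) else 0)) / 2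
        / (G.edgeFinset.card : ℝ)
      - ((∑ v ∈ V', (G.degree v : ℝ)) / (2 * (G.edgeFinset.card : ℝ))) ^ 2
      ≤ (4 * t ^ 2 + 2 * α - 3 * t) / ((n : ℝ) - 4) := by
  classical
  set N : ℝ := (n : ℝ) with hN
  have hN4 : (4 : ℝ) < N := by rw [hN]; exact_mod_cast hn4
  have hNpos : (0 : ℝ) < N := by linarith
  have hd : ((n - 4 : ℕ) : ℝ) = N - 4 := by
    have h4 : (4 : ℕ) ≤ n := le_of_lt hn4
    push_cast [Nat.cast_sub h4]; ring
  -- edge count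
  have hsumdeg : ∑ v, G.degree v = Fintype.card V * (n - 4) := by
    simp [hreg _, Finset.sum_const, Finset.card_univ, mul_comm]
  have h2m : 2 * G.edgeFinset.card = n * (n - 4) := by
    rw [← SimpleGraph.sum_degrees_eq_twice_card_edges, hsumdeg, hn]
  have hm : (G.edgeFinset.card : ℝ) = N * (N - 4) / 2 := by
    have := congrArg (fun k : ℕ => (k : ℝ)) h2m
    push_cast [hd] at this
    linarith
  -- degree sum over V'
  have hD : (∑ v ∈ V', (G.degree v : ℝ)) = t * N * (N - 4) := by
    have : (∑ v ∈ V', (G.degree v : ℝ)) = ∑ v ∈ V', (N - 4) := by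
      refine Finset.sum_congr rfl fun v _ => ?_
      rw [hreg v, hd]
    rw [this, Finset.sum_const, nsmul_eq_mul, hcard]
  -- double sum as card of adjacency pairs
  set P : Finset (V × V) := (V' ×ˢ V').filter (fun p => G.Adj p.1 p.2) with hP
  set Q : Finset (V × V) := (V' ×ˢ V').filter (fun p => ¬ G.Adj p.1 p.2) with hQ
  have hA : (∑ u ∈ V', ∑ v ∈ V', (if G.Adj u v then (1 : ℝ) else 0)) = (P.card : ℝ) := by
    rw [← Finset.sum_product']
    simp [hP, Finset.sum_boole]
  have hPQ : P.card + Q.card = V'.card * V'.card := by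
    rw [hP, hQ, Finset.card_filter_add_card_filter_not, Finset.card_product]
  -- choice of non-neighbor in S for each vertex of V' \ S
  have hex : ∀ u ∈ V' \ S, ∃ s ∈ S, ¬ G.Adj u s := by
    intro u hu
    by_contra h
    push_neg at h
    have hu' := Finset.mem_sdiff.mp hu
    have hclq : G.IsClique ((insert u S : Finset V) : Set V) := by
      rw [Finset.coe_insert]
      exact hSclique.insert (fun s hs _ => h s hs)
    have hle := hSmax (insert u S) (Finset.insert_subset hu'.1 hS) hclq
    rw [Finset.card_insert_of_notMem hu'.2] at hle
    omega
  have hgex : ∀ u : V, u ∈ V' \ S → (fun u => if h : ∃ s ∈ S, ¬ G.Adj u s then h.choose else u) u ∈ S ∧ ¬ G.Adj u ((fun u => if h : ∃ s ∈ S, ¬ G.Adj u s then h.choose else u) u) := by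
    intro u hu
    have h := hex u hu
    simp only [dif_pos h]
    exact ⟨h.choose_spec.1, h.choose_spec.2⟩
  set g : V → V := fun u => if h : ∃ s ∈ S, ¬ G.Adj u s then h.choose else u with hg
  -- three disjoint families of non-adjacent pairs
  set D0 : Finset (V × V) := V'.image (fun u => (u, u)) with hD0
  set E1 : Finset (V × V) := (V' \ S).image (fun u => (u, g u)) with hE1
  set E2 : Finset (V × V) := (V' \ S).image (fun u => (g u, u)) with hE2
  have hD0sub : D0 ⊆ Q := by
    intro p hp
    obtain ⟨u, hu, rfl⟩ := Finset.mem_image.mp hp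
    simp [hQ, Finset.mem_filter, Finset.mem_product, hu]
  have hE1sub : E1 ⊆ Q := by
    intro p hp
    obtain ⟨u, hu, rfl⟩ := Finset.mem_image.mp hp
    obtain ⟨hgS, hgadj⟩ := hgex u hu
    have hu' := Finset.mem_sdiff.mp hu
    simp [hQ, Finset.mem_filter, Finset.mem_product, hu'.1, hS hgS, hgadj]
  have hE2sub : E2 ⊆ Q := by
    intro p hp
    obtain ⟨u, hu, rfl⟩ := Finset.mem_image.mp hp
    obtain ⟨hgS, hgadj⟩ := hgex u hu
    have hu' := Finset.mem_sdiff.mp hu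
    have : ¬ G.Adj (g u) u := fun h => hgadj h.symm
    simp [hQ, Finset.mem_filter, Finset.mem_product, hu'.1, hS hgS, this]
  have hD0card : D0.card = V'.card :=
    Finset.card_image_of_injective _ (fun a b h => congrArg Prod.fst h)
  have hE1card : E1.card = (V' \ S).card :=
    Finset.card_image_of_injective _ (fun a b h => congrArg Prod.fst h)
  have hE2card : E2.card = (V' \ S).card :=
    Finset.card_image_of_injective _ (fun a b h => congrArg Prod.snd h)
  have hdisj1 : Disjoint D0 E1 := by
    rw [Finset.disjoint_left]
    intro p hp hp'
    obtain ⟨u, hu, rfl⟩ := Finset.mem_image.mp hp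
    obtain ⟨v, hv, hpe⟩ := Finset.mem_image.mp hp'
    obtain ⟨hgS, _⟩ := hgex v hv
    have hv' := Finset.mem_sdiff.mp hv
    have h1 : v = u := congrArg Prod.fst hpe
    have h2 : g v = u := congrArg Prod.snd hpe
    exact hv'.2 (h1 ▸ h2 ▸ hgS)
  have hdisj2 : Disjoint D0 E2 := by
    rw [Finset.disjoint_left]
    intro p hp hp'
    obtain ⟨u, hu, rfl⟩ := Finset.mem_image.mp hp
    obtain ⟨v, hv, hpe⟩ := Finset.mem_image.mp hp'
    obtain ⟨hgS, _⟩ := hgex v hv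
    have hv' := Finset.mem_sdiff.mp hv
    have h1 : g v = u := congrArg Prod.fst hpe
    have h2 : v = u := congrArg Prod.snd hpe
    exact hv'.2 (h2 ▸ h1 ▸ hgS)
  have hdisj3 : Disjoint E1 E2 := by
    rw [Finset.disjoint_left]
    intro p hp hp'
    obtain ⟨u, hu, rfl⟩ := Finset.mem_image.mp hp
    obtain ⟨v, hv, hpe⟩ := Finset.mem_image.mp hp'
    obtain ⟨hgS, _⟩ := hgex v hv
    have hu' := Finset.mem_sdiff.mp hu
    have h1 : g v = u := congrArg Prod.fst hpe
    exact hu'.2 (h1 ▸ hgS)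
  have hQge : V'.card + ((V' \ S).card + (V' \ S).card) ≤ Q.card := by
    have hsub : D0 ∪ (E1 ∪ E2) ⊆ Q :=
      Finset.union_subset hD0sub (Finset.union_subset hE1sub hE2sub)
    have hc := Finset.card_le_card hsub
    rw [Finset.card_union_of_disjoint (Finset.disjoint_union_right.mpr ⟨hdisj1, hdisj2⟩),
      Finset.card_union_of_disjoint hdisj3, hD0card, hE1card, hE2card] at hc
    exact hc
  -- key bound on P.card in ℝ
  have hsdiff : ((V' \ S).card : ℝ) = t * N - α * N := by
    rw [Finset.card_sdiff_of_subset hS, Nat.cast_sub (Finset.card_le_card hS), hcard, hScard]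
  have hkey : (P.card : ℝ) ≤ (t * N) ^ 2 - 3 * (t * N) + 2 * (α * N) := by
    have h1 : (P.card : ℝ) + (Q.card : ℝ) = (t * N) ^ 2 := by
      have := congrArg (fun k : ℕ => (k : ℝ)) hPQ
      push_cast at this
      rw [hcard] at this
      nlinarith [this]
    have h2 : t * N + ((t * N - α * N) + (t * N - α * N)) ≤ (Q.card : ℝ) := by
      have := (Nat.cast_le (α := ℝ)).mpr hQge
      push_cast at this
      rw [hcard, hsdiff] at this
      linarith
    nlinarith
  -- final arithmetic
  rw [hA, hD, hm]
  have hNm4 : (0 : ℝ) < N - 4 := by linarith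
  have hprod : (0 : ℝ) < N * (N - 4) := mul_pos hNpos hNm4
  have hne2 : N - 4 ≠ 0 := ne_of_gt hNm4
  have hne : N ≠ 0 := ne_of_gt hNpos
  have e1 : ((P.card : ℝ))/2/(N*(N-4)/2) = (P.card : ℝ)/(N*(N-4)) := by
    field_simp
  have e2 : t*N*(N-4)/(2*(N*(N-4)/2)) = t := by
    field_simp
  rw [e1, e2, sub_le_iff_le_add, div_add' _ _ _ hne2, div_le_div_iff₀ hprod hNm4]
  nlinarith [mul_le_mul_of_nonneg_right hkey hNm4.le]
end

section
/- For any finite graph G with m ≥ 1 edges, letting w_{u,v} = (a_{u,v} − d_u d_v/(2m))/(2m) and w'_{u,v} = w_{u,v} for u ≠ v and 0 for u = v, the total absolute mass W' = Σ_{u,v} |w'_{u,v}| is strictly less than 2. -/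
open Finset

/-- For any finite graph `G` with `m ≥ 1` edges, letting
`w_{u,v} = (a_{u,v} − d_u d_v/(2m))/(2m)` and `w'_{u,v} = w_{u,v}` for `u ≠ v`,
`w'_{u,u} = 0`, the total absolute mass `∑_{u,v} |w'_{u,v}|` is strictly less
than `2`. -/
theorem total_offdiag_weight_lt_two
    {V : Type*} [Fintype V] [DecidableEq V] (G : SimpleGraph V) [DecidableRel G.Adj]
    (hm0 : 0 < G.edgeFinset.card) :
    ∑ u, ∑ v,
        |if u = v then (0 : ℝ) else
          ((if G.Adj u v then (1 : ℝ) else 0)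
            - (G.degree u : ℝ) * (G.degree v : ℝ) / (2 * (G.edgeFinset.card : ℝ)))
          / (2 * (G.edgeFinset.card : ℝ))| < 2 := by
  have hmR : (0:ℝ) < (G.edgeFinset.card : ℝ) := by exact_mod_cast hm0
  set M : ℝ := 2 * (G.edgeFinset.card : ℝ) with hMdef
  have hM : 0 < M := by positivity
  set d : V → ℝ := fun v => (G.degree v : ℝ) with hd
  have hdnn : ∀ v, 0 ≤ d v := fun v => Nat.cast_nonneg _
  have hsumd : ∑ v, d v = M := by
    simp only [hd, hMdef]
    exact_mod_cast congrArg (Nat.cast : ℕ → ℝ) G.sum_degrees_eq_twice_card_edges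
  have hrow : ∀ u, ∑ v, (if G.Adj u v then (1:ℝ) else 0) = d u := by
    intro u
    rw [Finset.sum_boole]
    simp [hd, SimpleGraph.degree, SimpleGraph.neighborFinset_eq_filter]
  set f : V → V → ℝ := fun u v =>
    ((if G.Adj u v then (1:ℝ) else 0) + d u * d v / M) / M with hf
  have hpt : ∀ u v, |if u = v then (0 : ℝ) else
          ((if G.Adj u v then (1 : ℝ) else 0) - d u * d v / M) / M|
      ≤ (if u = v then 0 else f u v) := by
    intro u v
    by_cases h : u = v
    · simp [h]
    · simp only [hf, if_neg h]
      rw [abs_div, abs_of_pos hM]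
      apply div_le_div_of_nonneg_right ?_ hM.le |>.trans_eq rfl
      have h1 : |(if G.Adj u v then (1:ℝ) else 0) - d u * d v / M|
          ≤ |(if G.Adj u v then (1:ℝ) else 0)| + |d u * d v / M| := abs_sub _ _
      have h2 : |(if G.Adj u v then (1:ℝ) else 0)| = (if G.Adj u v then (1:ℝ) else 0) := by
        apply abs_of_nonneg; split <;> norm_num
      have h3 : |d u * d v / M| = d u * d v / M := by
        apply abs_of_nonneg; positivity
      linarith
  have step1 : ∑ u, ∑ v,
        |if u = v then (0 : ℝ) else
          ((if G.Adj u v then (1 : ℝ) else 0) - d u * d v / M) / M|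
      ≤ ∑ u, ∑ v, (if u = v then 0 else f u v) :=
    Finset.sum_le_sum fun u _ => Finset.sum_le_sum fun v _ => hpt u v
  have hsplit : ∀ u, ∑ v, (if u = v then (0:ℝ) else f u v)
      = (∑ v, f u v) - f u u := by
    intro u
    have : ∀ v, (if u = v then (0:ℝ) else f u v)
        = f u v - (if u = v then f u v else 0) := by
      intro v; by_cases h : u = v <;> simp [h]
    rw [Finset.sum_congr rfl fun v _ => this v, Finset.sum_sub_distrib,
      Finset.sum_ite_eq]
    simp
  have hrowsum : ∀ u, ∑ v, f u v = 2 * d u / M := by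
    intro u
    simp only [hf]
    rw [← Finset.sum_div, Finset.sum_add_distrib, hrow]
    have h2 : ∑ x, d u * d x / M = d u := by
      rw [← Finset.sum_div, ← Finset.mul_sum, hsumd, mul_div_assoc,
        div_self hM.ne', mul_one]
    rw [h2]; ring
  have hdiag : ∀ u, f u u = d u ^ 2 / M ^ 2 := by
    intro u
    simp only [hf, if_neg (G.irrefl)]
    ring
  have step2 : ∑ u, ∑ v, (if u = v then (0:ℝ) else f u v)
      = 2 - (∑ u, d u ^ 2) / M ^ 2 := by
    rw [Finset.sum_congr rfl fun u _ => hsplit u, Finset.sum_sub_distrib,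
      Finset.sum_congr rfl fun u _ => hrowsum u,
      Finset.sum_congr rfl fun u _ => hdiag u]
    rw [← Finset.sum_div, ← Finset.mul_sum, hsumd, ← Finset.sum_div,
      mul_div_assoc, div_self hM.ne', mul_one]
  have hpos : 0 < ∑ u, d u ^ 2 := by
    obtain ⟨u0, hu0⟩ : ∃ u, 0 < d u := by
      by_contra h
      push_neg at h
      have : ∑ v, d v ≤ 0 := Finset.sum_nonpos fun v _ => h v
      linarith [hsumd]
    have : d u0 ^ 2 ≤ ∑ u, d u ^ 2 :=
      Finset.single_le_sum (fun i _ => sq_nonneg (d i)) (Finset.mem_univ u0)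
    nlinarith
  have : (0:ℝ) < (∑ u, d u ^ 2) / M ^ 2 := div_pos hpos (pow_pos hM 2)
  calc ∑ u, ∑ v,
        |if u = v then (0 : ℝ) else
          ((if G.Adj u v then (1 : ℝ) else 0) - d u * d v / M) / M|
      ≤ 2 - (∑ u, d u ^ 2) / M ^ 2 := step1.trans_eq step2
    _ < 2 := by linarith
end
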